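/- arXiv:1206.0082 — 2 statements merged into one kernel-verified Lean document; each statement's English description precedes it below -/
import Mathlib

section
/- Let ℓ be a positive integer, let S_{2,ℓ} be the double star graph, and let u₁ and u₂ be the two vertices of degree one adjacent to the center u of degree three. Then for every real time τ there is no perfect state transfer from u₁ to u₂ at time τ. -/
open Matrix

noncomputable section

/-- Vertex set of the double star `S_{k,ℓ}`: `Sum.inl 0` is the centre `u`,
`Sum.inl 1` the centre `v`, `Sum.inr (Sum.inl i)` are the pendant neighbours of `u`,
and `Sum.inr (Sum.inr j)` are the pendant neighbours of `v`. -/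
abbrev DSVertex (k l : ℕ) := (Fin 2) ⊕ (Fin k ⊕ Fin l)

/-- The double star graph `S_{k,ℓ}`: the centres `u = Sum.inl 0` and `v = Sum.inl 1` are
adjacent, `u` is adjacent to its `k` pendant vertices and `v` to its `ℓ` pendant vertices. -/
def doubleStar (k l : ℕ) : SimpleGraph (DSVertex k l) :=
  SimpleGraph.fromRel (fun a b =>
    (a = Sum.inl 0 ∧ b = Sum.inl 1) ∨
    (∃ i : Fin k, a = Sum.inl 0 ∧ b = Sum.inr (Sum.inl i)) ∨
    (∃ j : Fin l, a = Sum.inl 1 ∧ b = Sum.inr (Sum.inr j)))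

instance (k l : ℕ) : DecidableRel (doubleStar k l).Adj := fun _ _ => Classical.dec _

/-- The continuous quantum walk `U(t) = exp(itA)`. -/
def qWalk {n : Type*} [Fintype n] [DecidableEq n] (A : Matrix n n ℂ) (t : ℝ) :
    Matrix n n ℂ :=
  NormedSpace.exp ((Complex.I * (t : ℂ)) • A)

/-- Perfect state transfer from `a` to `b` at time `τ` for the quantum walk of `A`:
`U(τ) e_a = γ e_b` for some `γ` with `|γ| = 1`. -/
def IsPST {n : Type*} [Fintype n] [DecidableEq n] (A : Matrix n n ℂ) (a b : n) (τ : ℝ) :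
    Prop :=
  ∃ γ : ℂ, ‖γ‖ = 1 ∧ (qWalk A τ).mulVec (Pi.single a 1) = γ • (Pi.single b 1 : n → ℂ)

/-! ### Auxiliary lemmas -/

lemma exp_mulVec_eigen {n : Type*} [Fintype n] [DecidableEq n] (M : Matrix n n ℂ)
    (v : n → ℂ) (μ : ℂ) (h : M.mulVec v = μ • v) :
    (NormedSpace.exp M).mulVec v = Complex.exp μ • v := by
  letI : NormedRing (Matrix n n ℂ) := Matrix.linftyOpNormedRing
  letI : NormedAlgebra ℂ (Matrix n n ℂ) := Matrix.linftyOpNormedAlgebra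
  have hpow : ∀ k : ℕ, (M ^ k).mulVec v = μ ^ k • v := by
    intro k
    induction k with
    | zero => simp
    | succ k ih =>
      rw [pow_succ, ← Matrix.mulVec_mulVec, h, Matrix.mulVec_smul, ih, pow_succ]
      rw [smul_smul, mul_comm]
  let L : Matrix n n ℂ →ₗ[ℂ] (n → ℂ) :=
    { toFun := fun N => N.mulVec v
      map_add' := fun N₁ N₂ => Matrix.add_mulVec N₁ N₂ v
      map_smul' := fun c N => Matrix.smul_mulVec c N v }
  have hLc : Continuous L := LinearMap.continuous_of_finiteDimensional L
  have hsum : Summable fun k : ℕ => ((Nat.factorial k : ℂ))⁻¹ • M ^ k :=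
    NormedSpace.expSeries_summable' (𝕂 := ℂ) M
  have key : (NormedSpace.exp M).mulVec v
      = ∑' k : ℕ, ((Nat.factorial k : ℂ))⁻¹ • (M ^ k).mulVec v := by
    rw [NormedSpace.exp_eq_tsum ℂ]
    have := hsum.hasSum.map L hLc
    refine this.tsum_eq.symm.trans ?_
    congr 1
    ext k
    simp [L, Matrix.smul_mulVec]
  rw [key]
  have h2 : ∀ k : ℕ, ((Nat.factorial k : ℂ))⁻¹ • (M ^ k).mulVec v
      = (((Nat.factorial k : ℂ))⁻¹ * μ ^ k) • v := by
    intro k; rw [hpow k, smul_smul]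
  simp_rw [h2]
  rw [Summable.tsum_smul_const ?_]
  · congr 1
    rw [Complex.exp_eq_exp_ℂ, NormedSpace.exp_eq_tsum ℂ]
    simp_rw [smul_eq_mul]
  · exact (NormedSpace.expSeries_summable' (𝕂 := ℂ) μ).congr (by simp)

lemma key_int (l : ℕ) (m n : ℤ) (hm : Odd m) (hn : Odd n)
    (h : m^2*n^2*((l:ℤ)+3)^2 = 2*l*(m^2+n^2)^2) : False := by
  obtain ⟨a, ha⟩ := hm
  obtain ⟨b, hb⟩ := hn
  have hj : m^2 + n^2 = 2*(2*a^2+2*a+2*b^2+2*b+1) := by subst ha hb; ring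
  set j : ℤ := 2*a^2+2*a+2*b^2+2*b+1 with hjd
  have hjodd : Odd j := ⟨a^2+a+b^2+b, by ring⟩
  rcases Int.even_or_odd (l:ℤ) with ⟨c, hc⟩ | ⟨c, hc⟩
  · have hodd : Odd (m^2*n^2*((l:ℤ)+3)^2) := by
      refine Odd.mul (Odd.mul ?_ ?_) ?_
      · exact ⟨2*a^2+2*a, by subst ha; ring⟩
      · exact ⟨2*b^2+2*b, by subst hb; ring⟩
      · exact ⟨2*c^2+6*c+4, by rw [hc]; ring⟩
    rw [h] at hodd
    exact (Int.not_odd_iff_even.mpr ⟨(l:ℤ)*(m^2+n^2)^2, by ring⟩) hodd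
  · have h4 : (4:ℤ) * ((m*n*(c+2))^2) = 4 * (2*(2*c+1)*j^2) := by
      rw [hc, hj] at h
      linear_combination h
    have hS : (m*n*(c+2))^2 = 2*(2*c+1)*j^2 := by linarith
    rcases Int.even_or_odd (m*n*(c+2)) with ⟨s, hs⟩ | ⟨s, hs⟩
    · have h2 : (2:ℤ) * (2*s^2) = 2 * ((2*c+1)*j^2) := by
        rw [hs] at hS; linear_combination hS
      have h3 : (2:ℤ)*s^2 = (2*c+1)*j^2 := by linarith
      have hoddr : Odd ((2*c+1)*j^2) := Odd.mul ⟨c, rfl⟩ (Odd.pow hjodd)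
      rw [← h3] at hoddr
      exact (Int.not_odd_iff_even.mpr ⟨s^2, by ring⟩) hoddr
    · have hoddS : Odd ((m*n*(c+2))^2) := Odd.pow (⟨s, hs⟩ : Odd _)
      rw [hS] at hoddS
      exact (Int.not_odd_iff_even.mpr ⟨(2*c+1)*j^2, by ring⟩) hoddS

lemma exp_I_mul_eq_neg_one {x : ℝ} (h : Complex.exp (Complex.I * x) = -1) :
    ∃ k : ℤ, x = (2*k+1)*Real.pi := by
  have h2 : Complex.exp (Complex.I * x - Real.pi * Complex.I) = 1 := by
    rw [Complex.exp_sub, h, Complex.exp_pi_mul_I]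
    norm_num
  rw [Complex.exp_eq_one_iff] at h2
  obtain ⟨k, hk⟩ := h2
  refine ⟨k, ?_⟩
  have h3 : ((x : ℂ) - (Real.pi : ℂ)) * Complex.I = ((k : ℂ) * (2 * Real.pi)) * Complex.I := by
    linear_combination hk
  have h4 : (x : ℂ) - (Real.pi : ℂ) = (k : ℂ) * (2 * Real.pi) :=
    mul_right_cancel₀ Complex.I_ne_zero h3
  have h5 : x - Real.pi = (k : ℝ) * (2 * Real.pi) := by exact_mod_cast h4
  linarith

section Graph

variable {l : ℕ}

lemma ds_adj (a b : DSVertex 2 l) :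
    (doubleStar 2 l).Adj a b ↔
      ((a = Sum.inl 0 ∧ b = Sum.inl 1) ∨ (a = Sum.inl 1 ∧ b = Sum.inl 0) ∨
       (∃ i : Fin 2, a = Sum.inl 0 ∧ b = Sum.inr (Sum.inl i)) ∨
       (∃ i : Fin 2, b = Sum.inl 0 ∧ a = Sum.inr (Sum.inl i)) ∨
       (∃ j : Fin l, a = Sum.inl 1 ∧ b = Sum.inr (Sum.inr j)) ∨
       (∃ j : Fin l, b = Sum.inl 1 ∧ a = Sum.inr (Sum.inr j))) := by
  constructor
  · rintro ⟨hne, h | h⟩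
    · rcases h with h | h | h
      · exact Or.inl h
      · exact Or.inr (Or.inr (Or.inl h))
      · exact Or.inr (Or.inr (Or.inr (Or.inr (Or.inl h))))
    · rcases h with h | h | h
      · exact Or.inr (Or.inl ⟨h.2, h.1⟩)
      · exact Or.inr (Or.inr (Or.inr (Or.inl (by obtain ⟨i, h1, h2⟩ := h; exact ⟨i, h1, h2⟩))))
      · exact Or.inr (Or.inr (Or.inr (Or.inr (Or.inr
          (by obtain ⟨j, h1, h2⟩ := h; exact ⟨j, h1, h2⟩)))))
  · intro h
    rcases h with ⟨h1, h2⟩ | ⟨h1, h2⟩ | ⟨i, h1, h2⟩ | ⟨i, h1, h2⟩ | ⟨j, h1, h2⟩ | ⟨j, h1, h2⟩ <;>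
      subst h1 <;> subst h2 <;>
      refine ⟨by simp, ?_⟩
    · exact Or.inl (Or.inl ⟨rfl, rfl⟩)
    · exact Or.inr (Or.inl ⟨rfl, rfl⟩)
    · exact Or.inl (Or.inr (Or.inl ⟨i, rfl, rfl⟩))
    · exact Or.inr (Or.inr (Or.inl ⟨i, rfl, rfl⟩))
    · exact Or.inl (Or.inr (Or.inr ⟨j, rfl, rfl⟩))
    · exact Or.inr (Or.inr (Or.inr ⟨j, rfl, rfl⟩))

def pvec (l : ℕ) : DSVertex 2 l → ℂ := fun x =>
  match x with
  | Sum.inr (Sum.inr _) => 1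
  | _ => 0

lemma col_a1 : (doubleStar 2 l).adjMatrix ℂ *ᵥ Pi.single (Sum.inr (Sum.inl 0)) 1
    = Pi.single (Sum.inl 0) 1 := by
  rw [Matrix.mulVec_single_one]
  funext i
  rcases i with i | x
  · fin_cases i <;> simp [SimpleGraph.adjMatrix_apply, ds_adj, Pi.single_apply]
  · rcases x with i | j
    · fin_cases i <;> simp [SimpleGraph.adjMatrix_apply, ds_adj, Pi.single_apply]
    · simp [SimpleGraph.adjMatrix_apply, ds_adj, Pi.single_apply]

lemma col_a2 : (doubleStar 2 l).adjMatrix ℂ *ᵥ Pi.single (Sum.inr (Sum.inl 1)) 1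
    = Pi.single (Sum.inl 0) 1 := by
  rw [Matrix.mulVec_single_one]
  funext i
  rcases i with i | x
  · fin_cases i <;> simp [SimpleGraph.adjMatrix_apply, ds_adj, Pi.single_apply]
  · rcases x with i | j
    · fin_cases i <;> simp [SimpleGraph.adjMatrix_apply, ds_adj, Pi.single_apply]
    · simp [SimpleGraph.adjMatrix_apply, ds_adj, Pi.single_apply]

lemma col_u : (doubleStar 2 l).adjMatrix ℂ *ᵥ Pi.single (Sum.inl 0) 1
    = Pi.single (Sum.inr (Sum.inl 0)) 1 + Pi.single (Sum.inr (Sum.inl 1)) 1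
      + Pi.single (Sum.inl 1) 1 := by
  rw [Matrix.mulVec_single_one]
  funext i
  rcases i with i | x
  · fin_cases i <;>
      simp [SimpleGraph.adjMatrix_apply, ds_adj, Pi.single_apply]
  · rcases x with i | j
    · fin_cases i <;>
        simp [SimpleGraph.adjMatrix_apply, ds_adj, Pi.single_apply]
    · simp [SimpleGraph.adjMatrix_apply, ds_adj, Pi.single_apply]

lemma col_v : (doubleStar 2 l).adjMatrix ℂ *ᵥ Pi.single (Sum.inl 1) 1
    = Pi.single (Sum.inl 0) 1 + pvec l := by
  rw [Matrix.mulVec_single_one]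
  funext i
  rcases i with i | x
  · fin_cases i <;>
      simp [SimpleGraph.adjMatrix_apply, ds_adj, Pi.single_apply, pvec]
  · rcases x with i | j
    · fin_cases i <;>
        simp [SimpleGraph.adjMatrix_apply, ds_adj, Pi.single_apply, pvec]
    · simp [SimpleGraph.adjMatrix_apply, ds_adj, Pi.single_apply, pvec]

lemma col_p : (doubleStar 2 l).adjMatrix ℂ *ᵥ pvec l
    = (l : ℂ) • (Pi.single (Sum.inl 1) 1 : DSVertex 2 l → ℂ) := by
  funext i
  rw [Matrix.mulVec]
  have h : dotProduct ((doubleStar 2 l).adjMatrix ℂ i) (pvec l)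
      = ∑ j : Fin l, (doubleStar 2 l).adjMatrix ℂ i (Sum.inr (Sum.inr j)) := by
    rw [dotProduct, Fintype.sum_sum_type, Fintype.sum_sum_type]
    simp [pvec]
  rw [h]
  rcases i with i | x
  · fin_cases i <;>
      simp [SimpleGraph.adjMatrix_apply, ds_adj, Pi.single_apply]
  · rcases x with i | j
    · fin_cases i <;>
        simp [SimpleGraph.adjMatrix_apply, ds_adj, Pi.single_apply]
    · simp [SimpleGraph.adjMatrix_apply, ds_adj, Pi.single_apply, Sum.inr.injEq]

end Graph

/-- in `S_{2,ℓ}` there is no perfect state transfer between the two pendant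
vertices adjacent to the centre of degree three at any time. -/
theorem no_pst_S2l_pendants (l : ℕ) (hl : 0 < l) (τ : ℝ) :
    ¬ IsPST ((doubleStar 2 l).adjMatrix ℂ)
        (Sum.inr (Sum.inl 0)) (Sum.inr (Sum.inl 1)) τ := by
  rintro ⟨γ, hγ, hPST⟩
  set e1 : DSVertex 2 l → ℂ := Pi.single (Sum.inr (Sum.inl 0)) 1 with he1
  set e2 : DSVertex 2 l → ℂ := Pi.single (Sum.inr (Sum.inl 1)) 1 with he2
  set eu : DSVertex 2 l → ℂ := Pi.single (Sum.inl 0) 1 with heu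
  set ev : DSVertex 2 l → ℂ := Pi.single (Sum.inl 1) 1 with hev
  set p : DSVertex 2 l → ℂ := pvec l with hp
  set A : Matrix (DSVertex 2 l) (DSVertex 2 l) ℂ := (doubleStar 2 l).adjMatrix ℂ with hA
  set W : Matrix (DSVertex 2 l) (DSVertex 2 l) ℂ := qWalk A τ with hWdef
  -- basic matrix facts
  have hWexp : W = NormedSpace.exp ((Complex.I * (τ:ℂ)) • A) := rfl
  have hAsymm : Aᵀ = A := SimpleGraph.isSymm_adjMatrix _
  have hWsymm : Wᵀ = W := by
    rw [hWexp, ← Matrix.exp_transpose, Matrix.transpose_smul, hAsymm]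
  have hcomm : W * A = A * W := by
    have h1 : Commute ((Complex.I * (τ:ℂ)) • A) A := (Commute.refl A).smul_left _
    exact (h1.exp_left).eq
  have hswap : ∀ x : DSVertex 2 l → ℂ, W *ᵥ (A *ᵥ x) = A *ᵥ (W *ᵥ x) := by
    intro x; rw [Matrix.mulVec_mulVec, Matrix.mulVec_mulVec, hcomm]
  -- columns
  have hA1 : A *ᵥ e1 = eu := col_a1
  have hA2 : A *ᵥ e2 = eu := col_a2
  have hAu : A *ᵥ eu = e1 + e2 + ev := col_u
  have hAv : A *ᵥ ev = eu + p := col_v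
  have hAp : A *ᵥ p = (l:ℂ) • ev := col_p
  -- the antisymmetric eigenvector
  have hAw : A *ᵥ (e1 - e2) = (0:ℂ) • (e1 - e2) := by
    rw [Matrix.mulVec_sub, hA1, hA2, sub_self, zero_smul]
  have hWw : W *ᵥ (e1 - e2) = e1 - e2 := by
    have h0 : ((Complex.I * (τ:ℂ)) • A) *ᵥ (e1 - e2) = (0:ℂ) • (e1 - e2) := by
      rw [Matrix.smul_mulVec, hAw]
      simp
    have := exp_mulVec_eigen _ _ _ h0
    rw [← hWexp] at this
    simpa [Complex.exp_zero] using this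
  -- γ = -1
  have hdot1 : dotProduct (e1 - e2) (W *ᵥ e1) = 1 := by
    rw [Matrix.dotProduct_mulVec]
    have hv : (e1 - e2) ᵥ* W = e1 - e2 := by
      rw [← hWsymm, Matrix.vecMul_transpose, hWw]
    rw [hv]
    simp [he1, he2, sub_dotProduct, dotProduct_single,
      single_dotProduct, Pi.single_apply]
  have hdot2 : dotProduct (e1 - e2) (W *ᵥ e1) = -γ := by
    rw [hPST]
    simp [he1, he2, dotProduct_smul, sub_dotProduct,
      dotProduct_single, Pi.single_apply]
  have hγ1 : γ = -1 := by
    have := hdot1.symm.trans hdot2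
    linear_combination this
  rw [hγ1] at hPST
  have hWe1 : W *ᵥ e1 = -e2 := by rw [hPST]; simp
  have hWe2 : W *ᵥ e2 = -e1 := by
    have h1 : e2 = e1 - (e1 - e2) := by abel
    rw [h1, Matrix.mulVec_sub, hWe1, hWw]
    abel
  have hWs : W *ᵥ (e1 + e2) = -(e1 + e2) := by
    rw [Matrix.mulVec_add, hWe1, hWe2]
    abel
  -- walk acts as -1 on the symmetric subspace
  have hL : A *ᵥ (e1 + e2) = eu + eu := by rw [Matrix.mulVec_add, hA1, hA2]
  have hWeu : W *ᵥ eu = -eu := by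
    have h1 := hswap (e1 + e2)
    rw [hL, hWs, Matrix.mulVec_neg, hL, Matrix.mulVec_add] at h1
    have h3 : (2:ℂ) • (W *ᵥ eu) = (2:ℂ) • (-eu) := by
      rw [two_smul, two_smul, h1]
      abel
    exact smul_right_injective _ two_ne_zero h3
  have hWev : W *ᵥ ev = -ev := by
    have h1 := hswap eu
    rw [hAu, hWeu, Matrix.mulVec_neg, hAu, Matrix.mulVec_add, hWs] at h1
    -- h1 : -(e1+e2) + W *ᵥ ev = -(e1 + e2 + ev)
    calc W *ᵥ ev = (e1+e2) + (-(e1+e2) + W *ᵥ ev) := by abel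
    _ = (e1+e2) + -(e1 + e2 + ev) := by rw [h1]
    _ = -ev := by abel
  have hWp : W *ᵥ p = -p := by
    have h1 := hswap ev
    rw [hAv, hWev, Matrix.mulVec_neg, hAv, Matrix.mulVec_add, hWeu] at h1
    -- h1 : -eu + W *ᵥ p = -(eu + p)
    calc W *ᵥ p = eu + (-eu + W *ᵥ p) := by abel
    _ = eu + -(eu + p) := by rw [h1]
    _ = -p := by abel
  -- the symmetric eigenvectors force exp(iτθ) = -1
  have main : ∀ θ : ℝ, θ ≠ 0 →
      θ^2*θ^2 - ((l:ℝ)+3)*θ^2 + 2*(l:ℝ) = 0 →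
      Complex.exp (Complex.I * ((τ*θ : ℝ) : ℂ)) = -1 := by
    intro θ hθ0 hθq
    have hcq : (θ:ℂ)^2*(θ:ℂ)^2 - ((l:ℂ)+3)*(θ:ℂ)^2 + 2*(l:ℂ) = 0 := by
      have h' := congrArg (fun x : ℝ => (x : ℂ)) hθq
      push_cast at h'
      linear_combination h'
    set vθ : DSVertex 2 l → ℂ := (θ:ℂ) • (e1 + e2) + ((θ:ℂ)^2) • eu
        + ((θ:ℂ)*((θ:ℂ)^2 - 2)) • ev + ((θ:ℂ)^2 - 2) • p with hv
    have hAvθ : A *ᵥ vθ = (θ:ℂ) • vθ := by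
      rw [hv, Matrix.mulVec_add, Matrix.mulVec_add, Matrix.mulVec_add,
          Matrix.mulVec_smul, Matrix.mulVec_smul, Matrix.mulVec_smul, Matrix.mulVec_smul,
          hL, hAu, hAv, hAp]
      match_scalars <;>
        first
          | ring1
          | linear_combination hcq
          | linear_combination -hcq
          | linear_combination (θ:ℂ) * hcq
          | linear_combination (-(θ:ℂ)) * hcq
          | linear_combination ((θ:ℂ)+1) * hcq
          | linear_combination (-(θ:ℂ)-1) * hcq
    have hμ : ((Complex.I * (τ:ℂ)) • A) *ᵥ vθ = (Complex.I * (τ:ℂ) * (θ:ℂ)) • vθ := by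
      rw [Matrix.smul_mulVec, hAvθ, smul_smul]
    have hexp := exp_mulVec_eigen _ _ _ hμ
    rw [← hWexp] at hexp
    have hWvθ : W *ᵥ vθ = -vθ := by
      rw [hv, Matrix.mulVec_add, Matrix.mulVec_add, Matrix.mulVec_add,
          Matrix.mulVec_smul, Matrix.mulVec_smul, Matrix.mulVec_smul, Matrix.mulVec_smul,
          hWs, hWeu, hWev, hWp]
      module
    have hzero : (Complex.exp (Complex.I * (τ:ℂ) * (θ:ℂ)) + 1) • vθ = 0 := by
      rw [add_smul, one_smul, ← hexp, hWvθ]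
      abel
    have hcoord : vθ (Sum.inl 0) = (θ:ℂ)^2 := by
      simp [hv, he1, he2, heu, hev, hp, pvec, Pi.single_apply]
    have hval := congrFun hzero (Sum.inl 0)
    rw [Pi.smul_apply, hcoord] at hval
    have hθc : ((θ:ℂ)^2) ≠ 0 := pow_ne_zero _ (Complex.ofReal_ne_zero.mpr hθ0)
    have hfac : Complex.exp (Complex.I * (τ:ℂ) * (θ:ℂ)) + 1 = 0 := by
      rcases mul_eq_zero.mp hval with h | h
      · exact h
      · exact absurd h hθc
    rw [Complex.ofReal_mul, ← mul_assoc]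
    linear_combination hfac
  -- the two positive eigenvalues
  have hlR : (1:ℝ) ≤ (l:ℝ) := by exact_mod_cast hl
  have hD : (0:ℝ) ≤ ((l:ℝ)-1)^2 + 8 := by positivity
  set d : ℝ := Real.sqrt (((l:ℝ)-1)^2 + 8) with hdd
  have hd2 : d^2 = ((l:ℝ)-1)^2 + 8 := Real.sq_sqrt hD
  have hd0 : 0 ≤ d := Real.sqrt_nonneg _
  have hdlt : d < (l:ℝ)+3 := by nlinarith [hd2, hd0, hlR]
  have hrα : 0 < (((l:ℝ)+3) + d)/2 := by linarith
  have hrβ : 0 < (((l:ℝ)+3) - d)/2 := by linarith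
  have hα2 : (Real.sqrt ((((l:ℝ)+3) + d)/2))^2 = (((l:ℝ)+3) + d)/2 :=
    Real.sq_sqrt hrα.le
  have hβ2 : (Real.sqrt ((((l:ℝ)+3) - d)/2))^2 = (((l:ℝ)+3) - d)/2 :=
    Real.sq_sqrt hrβ.le
  set α : ℝ := Real.sqrt ((((l:ℝ)+3) + d)/2) with hαd
  set β : ℝ := Real.sqrt ((((l:ℝ)+3) - d)/2) with hβd
  have hα0 : α ≠ 0 := by
    have := Real.sqrt_pos.mpr hrα
    rw [← hαd] at this
    exact this.ne'
  have hβ0 : β ≠ 0 := by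
    have := Real.sqrt_pos.mpr hrβ
    rw [← hβd] at this
    exact this.ne'
  have hαq : α^2*α^2 - ((l:ℝ)+3)*α^2 + 2*(l:ℝ) = 0 := by
    rw [hα2]
    linear_combination (1/4) * hd2
  have hβq : β^2*β^2 - ((l:ℝ)+3)*β^2 + 2*(l:ℝ) = 0 := by
    rw [hβ2]
    linear_combination (1/4) * hd2
  have hsum2 : α^2 + β^2 = (l:ℝ)+3 := by rw [hα2, hβ2]; ring
  have hprod2 : α^2 * β^2 = 2*(l:ℝ) := by
    rw [hα2, hβ2]
    linear_combination (-(1/4)) * hd2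
  obtain ⟨ka, hka⟩ := exp_I_mul_eq_neg_one (main α hα0 hαq)
  obtain ⟨kb, hkb⟩ := exp_I_mul_eq_neg_one (main β hβ0 hβq)
  -- derive the integer identity
  have hπ : (0:ℝ) < Real.pi := Real.pi_pos
  have em1 : (2*(ka:ℝ)+1)^2*Real.pi^2 = τ^2*α^2 := by
    linear_combination (-(τ*α + (2*(ka:ℝ)+1)*Real.pi)) * hka
  have em2 : (2*(kb:ℝ)+1)^2*Real.pi^2 = τ^2*β^2 := by
    linear_combination (-(τ*β + (2*(kb:ℝ)+1)*Real.pi)) * hkb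
  have h5 : ((2*(ka:ℝ)+1)^2+(2*(kb:ℝ)+1)^2)*Real.pi^2 = τ^2*((l:ℝ)+3) := by
    linear_combination em1 + em2 + τ^2*hsum2
  have h6 : (2*(ka:ℝ)+1)^2*(2*(kb:ℝ)+1)^2*Real.pi^4 = 2*(l:ℝ)*τ^4 := by
    linear_combination (2*(kb:ℝ)+1)^2*Real.pi^2*em1 + τ^2*α^2*em2 + τ^4*hprod2
  have h7 : ((2*(ka:ℝ)+1)^2*(2*(kb:ℝ)+1)^2*((l:ℝ)+3)^2) * Real.pi^4
      = (2*(l:ℝ)*((2*(ka:ℝ)+1)^2+(2*(kb:ℝ)+1)^2)^2) * Real.pi^4 := by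
    linear_combination ((l:ℝ)+3)^2*h6
      - 2*(l:ℝ)*(((2*(ka:ℝ)+1)^2+(2*(kb:ℝ)+1)^2)*Real.pi^2 + τ^2*((l:ℝ)+3))*h5
  have hreal : (2*(ka:ℝ)+1)^2*(2*(kb:ℝ)+1)^2*((l:ℝ)+3)^2
      = 2*(l:ℝ)*((2*(ka:ℝ)+1)^2+(2*(kb:ℝ)+1)^2)^2 :=
    mul_right_cancel₀ (pow_ne_zero 4 hπ.ne') h7
  have hint : (2*ka+1)^2*(2*kb+1)^2*((l:ℤ)+3)^2 = 2*(l:ℤ)*((2*ka+1)^2+(2*kb+1)^2)^2 := by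
    have hcast : (((2*ka+1)^2*(2*kb+1)^2*((l:ℤ)+3)^2 : ℤ) : ℝ)
        = ((2*(l:ℤ)*((2*ka+1)^2+(2*kb+1)^2)^2 : ℤ) : ℝ) := by
      push_cast
      linear_combination hreal
    exact_mod_cast hcast
  exact key_int l (2*ka+1) (2*kb+1) ⟨ka, by ring⟩ ⟨kb, by ring⟩ hint
end
end

section
/- Let ℓ be a positive integer, let S_{2,ℓ} be the double star graph, and let u₁ and u₂ be the two vertices of degree one adjacent to the center u of degree three. If there is perfect state transfer from u₁ to u₂ at time t, then exp(iθt) = −1 for each of the four real numbers θ = ε·(1/2)·√(2ℓ+6+2δ√(ℓ²−2ℓ+9)) with ε, δ ∈ {1, −1}. -/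
open Matrix

noncomputable section

/-- exp of a matrix acts on eigenvectors as scalar exp. -/
theorem exp_mulVec_eig {n : Type*} [Fintype n] [DecidableEq n] (M : Matrix n n ℂ)
    (x : n → ℂ) (c : ℂ) (hx : M.mulVec x = c • x) :
    (NormedSpace.exp M).mulVec x = Complex.exp c • x := by
  letI : NormedRing (Matrix n n ℂ) := Matrix.linftyOpNormedRing
  letI : NormedAlgebra ℂ (Matrix n n ℂ) := Matrix.linftyOpNormedAlgebra
  have hpow : ∀ k : ℕ, (M ^ k).mulVec x = c ^ k • x := by
    intro k; induction k with
    | zero => simp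
    | succ k ih =>
      rw [pow_succ, ← Matrix.mulVec_mulVec, hx, Matrix.mulVec_smul, ih, smul_smul,
        pow_succ, mul_comm]
  let f : Matrix n n ℂ →ₗ[ℂ] (n → ℂ) :=
    { toFun := fun N => N.mulVec x,
      map_add' := fun N P => Matrix.add_mulVec N P x,
      map_smul' := fun a N => Matrix.smul_mulVec a N x }
  have hf : Continuous f := LinearMap.continuous_of_finiteDimensional f
  have hsum : Summable (fun k : ℕ => ((k.factorial : ℂ))⁻¹ • M ^ k) :=
    NormedSpace.expSeries_summable' M
  have h1 : (NormedSpace.exp M).mulVec x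
      = ∑' k : ℕ, ((k.factorial : ℂ))⁻¹ • (M ^ k).mulVec x := by
    rw [NormedSpace.exp_eq_tsum ℂ]
    exact ((hsum.hasSum.map (⟨f, hf⟩ : Matrix n n ℂ →L[ℂ] (n → ℂ))
      (ContinuousLinearMap.continuous _)).tsum_eq).symm
      |>.trans (by simp [f, Matrix.smul_mulVec])
  rw [h1]
  have hsc : Summable (fun k : ℕ => ((k.factorial : ℂ))⁻¹ * c ^ k) := by
    simpa [smul_eq_mul] using NormedSpace.expSeries_summable' (𝕂 := ℂ) c
  calc ∑' k : ℕ, ((k.factorial : ℂ))⁻¹ • (M ^ k).mulVec x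
      = ∑' k : ℕ, (((k.factorial : ℂ))⁻¹ * c ^ k) • x := by
        simp [hpow, smul_smul]
    _ = (∑' k : ℕ, ((k.factorial : ℂ))⁻¹ * c ^ k) • x := hsc.tsum_smul_const x
    _ = Complex.exp c • x := by
        rw [Complex.exp_eq_exp_ℂ, NormedSpace.exp_eq_tsum ℂ]
        simp [smul_eq_mul]

theorem doubleStar_adj (k l : ℕ) (a b : DSVertex k l) :
    (doubleStar k l).Adj a b = (SimpleGraph.fromRel (fun a b =>
    (a = Sum.inl 0 ∧ b = Sum.inl 1) ∨
    (∃ i : Fin k, a = Sum.inl 0 ∧ b = Sum.inr (Sum.inl i)) ∨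
    (∃ j : Fin l, a = Sum.inl 1 ∧ b = Sum.inr (Sum.inr j)))).Adj a b := rfl

/-- symmetric eigenvector for nonzero eigenvalue θ of S_{2,l}. -/
def evec (l : ℕ) (θ : ℂ) : DSVertex 2 l → ℂ := fun p =>
  match p with
  | Sum.inl 0 => θ^2
  | Sum.inl 1 => θ*(θ^2-2)
  | Sum.inr (Sum.inl _) => θ
  | Sum.inr (Sum.inr _) => θ^2-2

theorem evec_eig (l : ℕ) (θ : ℂ) (hθ : θ^4 - (3+(l:ℂ))*θ^2 + 2*l = 0) :
    ((doubleStar 2 l).adjMatrix ℂ).mulVec (evec l θ) = θ • (evec l θ) := by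
  funext p
  rcases p with ⟨i,hi⟩ | (⟨i,hi⟩ | j)
  · interval_cases i
    · simp [Matrix.mulVec, dotProduct, SimpleGraph.adjMatrix_apply, doubleStar_adj,
        Fintype.sum_sum_type, Fin.sum_univ_two, evec]
      ring
    · simp [Matrix.mulVec, dotProduct, SimpleGraph.adjMatrix_apply, doubleStar_adj,
        Fintype.sum_sum_type, Fin.sum_univ_two, evec, Finset.sum_const]
      linear_combination (-1 : ℂ) * hθ
  · interval_cases i <;>
    · simp [Matrix.mulVec, dotProduct, SimpleGraph.adjMatrix_apply, doubleStar_adj,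
        Fintype.sum_sum_type, Fin.sum_univ_two, evec]
      ring
  · simp [Matrix.mulVec, dotProduct, SimpleGraph.adjMatrix_apply, doubleStar_adj,
      Fintype.sum_sum_type, Fin.sum_univ_two, evec]

/-- antisymmetric eigenvector for eigenvalue 0. -/
def zvec (l : ℕ) : DSVertex 2 l → ℂ := fun p =>
  match p with
  | Sum.inr (Sum.inl i) => if i = (0 : Fin 2) then 1 else -1
  | _ => 0

theorem zvec_eig (l : ℕ) :
    ((doubleStar 2 l).adjMatrix ℂ).mulVec (zvec l) = (0:ℂ) • (zvec l) := by
  funext p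
  rcases p with ⟨i,hi⟩ | (⟨i,hi⟩ | j)
  · interval_cases i <;>
      simp [Matrix.mulVec, dotProduct, SimpleGraph.adjMatrix_apply, doubleStar_adj,
        Fintype.sum_sum_type, Fin.sum_univ_two, zvec]
  · interval_cases i <;>
      simp [Matrix.mulVec, dotProduct, SimpleGraph.adjMatrix_apply, doubleStar_adj,
        Fintype.sum_sum_type, Fin.sum_univ_two, zvec]
  · simp [Matrix.mulVec, dotProduct, SimpleGraph.adjMatrix_apply, doubleStar_adj,
      Fintype.sum_sum_type, Fin.sum_univ_two, zvec]

/-- if `S_{2,ℓ}` has perfect state transfer between the two pendant vertices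
adjacent to the centre of degree three at time `t`, then `exp(iθt) = -1` for each of the
four nonzero eigenvalues `θ = ε·(1/2)·√(2ℓ+6+2δ√(ℓ²−2ℓ+9))`, `ε, δ ∈ {1, −1}`. -/
theorem pst_S2l_eigenvalue_condition (l : ℕ) (hl : 0 < l) (t : ℝ)
    (h : IsPST ((doubleStar 2 l).adjMatrix ℂ)
        (Sum.inr (Sum.inl 0)) (Sum.inr (Sum.inl 1)) t) :
    ∀ e d : ℝ, (e = 1 ∨ e = -1) → (d = 1 ∨ d = -1) →
      Complex.exp (Complex.I *
        ((e * (1 / 2) *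
          Real.sqrt (2 * l + 6 + 2 * d * Real.sqrt ((l : ℝ) ^ 2 - 2 * l + 9)) : ℝ) : ℂ) *
        (t : ℂ)) = -1 := by
  intro e d he hd
  obtain ⟨γ, hγ, hPST⟩ := h
  set A := (doubleStar 2 l).adjMatrix ℂ with hA
  have hAT : Aᵀ = A := by rw [hA]; exact SimpleGraph.transpose_adjMatrix _
  have hUT : (qWalk A t)ᵀ = qWalk A t := by
    rw [qWalk, ← Matrix.exp_transpose]
    congr 1
    rw [Matrix.transpose_smul, hAT]
  have key : ∀ (x : DSVertex 2 l → ℂ) (θ : ℂ), A.mulVec x = θ • x →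
      Complex.exp (Complex.I * t * θ) * x (Sum.inr (Sum.inl 0))
        = γ * x (Sum.inr (Sum.inl 1)) := by
    intro x θ hx
    have hU : (qWalk A t).mulVec x = Complex.exp (Complex.I * t * θ) • x := by
      have h2 : ((Complex.I * (t:ℂ)) • A).mulVec x = (Complex.I * t * θ) • x := by
        rw [Matrix.smul_mulVec, hx, smul_smul]
      simpa [qWalk] using exp_mulVec_eig _ x _ h2
    have h1 : x ⬝ᵥ (qWalk A t).mulVec (Pi.single (Sum.inr (Sum.inl 0)) 1)
        = γ * x (Sum.inr (Sum.inl 1)) := by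
      rw [hPST]
      simp [dotProduct, Pi.single_apply, mul_comm]
    have h2 : x ⬝ᵥ (qWalk A t).mulVec (Pi.single (Sum.inr (Sum.inl 0)) 1)
        = Complex.exp (Complex.I * t * θ) * x (Sum.inr (Sum.inl 0)) := by
      rw [dotProduct_mulVec, ← Matrix.mulVec_transpose, hUT, hU]
      simp [dotProduct, Pi.single_apply]
    rw [← h1, h2]
  -- γ = -1 from the antisymmetric 0-eigenvector
  have hz := key (zvec l) 0 (zvec_eig l)
  have hγneg : γ = -1 := by
    simp [zvec] at hz
    linear_combination hz
  -- real arithmetic for θ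
  have hDnn : (0:ℝ) ≤ (l:ℝ)^2 - 2*l + 9 := by nlinarith [sq_nonneg ((l:ℝ) - 1)]
  set D := Real.sqrt ((l:ℝ)^2 - 2*l + 9) with hDdef
  have hD2 : D^2 = (l:ℝ)^2 - 2*l + 9 := Real.sq_sqrt hDnn
  have hDnn' : 0 ≤ D := Real.sqrt_nonneg _
  have hl1 : (1:ℝ) ≤ (l:ℝ) := by exact_mod_cast hl
  have hDlt : D < (l:ℝ) + 3 := by nlinarith
  have hSpos : (0:ℝ) < 2*l + 6 + 2*d*D := by
    rcases hd with rfl | rfl <;> nlinarith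
  set θ : ℝ := e * (1 / 2) * Real.sqrt (2 * l + 6 + 2 * d * D) with hθdef
  have hsq : Real.sqrt (2*l + 6 + 2*d*D) ^ 2 = 2*l + 6 + 2*d*D := Real.sq_sqrt hSpos.le
  have hθ2 : θ^2 = (2*l + 6 + 2*d*D)/4 := by
    rcases he with rfl | rfl <;>
      (rw [hθdef, mul_pow, hsq]; ring)
  have hθne : θ ≠ 0 := by
    have hs : Real.sqrt (2*l + 6 + 2*d*D) > 0 := Real.sqrt_pos.mpr hSpos
    rcases he with rfl | rfl <;> (rw [hθdef]; intro hc; nlinarith [hs])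
  have hd2 : d^2 = 1 := by rcases hd with rfl | rfl <;> norm_num
  have hpolyR : θ^4 - (3+(l:ℝ))*θ^2 + 2*l = 0 := by
    have h4 : θ^4 = ((2*l + 6 + 2*d*D)/4)^2 := by rw [← hθ2]; ring
    rw [h4, hθ2]
    linear_combination (D^2/4) * hd2 + (1/4) * hD2
  have hpolyC : (θ:ℂ)^4 - (3+(l:ℂ))*(θ:ℂ)^2 + 2*(l:ℂ) = 0 := by
    have := congrArg (Complex.ofReal) hpolyR
    push_cast at this ⊢
    linear_combination this
  have hev := key (evec l θ) (θ:ℂ) (evec_eig l (θ:ℂ) hpolyC)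
  simp only [evec, hγneg] at hev
  have hθneC : (θ:ℂ) ≠ 0 := by exact_mod_cast hθne
  have hexp : Complex.exp (Complex.I * t * θ) = -1 := by
    apply mul_right_cancel₀ hθneC
    linear_combination hev
  rw [show Complex.I * ((θ:ℝ):ℂ) * (t:ℂ) = Complex.I * t * θ by ring]
  exact hexp
end
end
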